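/- Suppose F ∈ L_γ for some γ > 0. Then for every γ′ ∈ (0, γ) there exists x₀ such that for all x ≥ x₀ and all t ≤ −1, F̄(x − t) ≤ F̄(x) e^{γ′ t}. -/

import Mathlib

open MeasureTheory Filter Set

/-- The tail distribution function of a probability measure on ℝ. -/
noncomputable def tail (μ : Measure ℝ) (x : ℝ) : ℝ := (μ (Set.Ioi x)).toReal

/-- The exponential moment `φ_F(α) = ∫ e^{αx} dF(x)`, valued in `[0,∞]`. -/
noncomputable def expMoment (μ : Measure ℝ) (α : ℝ) : ENNReal :=
  ∫⁻ x, ENNReal.ofReal (Real.exp (α * x)) ∂μ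

/-- The class `L_γ`: positive tail, and `F̄(x-k)/F̄(x) → e^{γ k}` for every fixed `k`. -/
def MemL (μ : Measure ℝ) (γ : ℝ) : Prop :=
  (∀ x, 0 < tail μ x) ∧
  ∀ k : ℝ, Tendsto (fun x => tail μ (x - k) / tail μ x) atTop (nhds (Real.exp (γ * k)))

lemma tail_anti (μ : Measure ℝ) [IsProbabilityMeasure μ] : Antitone (tail μ) := by
  intro a b hab
  exact ENNReal.toReal_mono (measure_ne_top μ _) (measure_mono (Set.Ioi_subset_Ioi hab))

theorem memL_tail_exp_bound (μ : Measure ℝ) [IsProbabilityMeasure μ] (γ : ℝ)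
    (hγ : 0 < γ) (hL : MemL μ γ) :
    ∀ γ' ∈ Set.Ioo 0 γ, ∃ x₀ : ℝ, ∀ x ≥ x₀, ∀ t ≤ (-1 : ℝ),
      tail μ (x - t) ≤ tail μ x * Real.exp (γ' * t) := by
  rintro γ' ⟨hγ'0, hγ'γ⟩
  set c := (γ' + γ) / 2 with hcdef
  have hc1 : γ' < c := by simp only [hcdef]; linarith
  have hc2 : c < γ := by simp only [hcdef]; linarith
  have hc0 : 0 < c := by linarith
  set h := (c - γ') / c with hhdef
  have hh0 : 0 < h := div_pos (by linarith) hc0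
  have hch : c * h = c - γ' := by
    rw [hhdef]; field_simp
  have hlt : Real.exp (γ * (-h)) < Real.exp (-(c * h)) := by
    apply Real.exp_lt_exp.2
    nlinarith
  have hev : ∀ᶠ x in atTop, tail μ (x - (-h)) / tail μ x < Real.exp (-(c * h)) :=
    (hL.2 (-h)).eventually_lt_const hlt
  obtain ⟨x₀, hx₀⟩ := eventually_atTop.1 hev
  have step : ∀ x ≥ x₀, tail μ (x + h) ≤ Real.exp (-(c * h)) * tail μ x := by
    intro x hx
    have := hx₀ x hx
    rw [sub_neg_eq_add] at this
    exact le_of_lt ((div_lt_iff₀ (hL.1 x)).1 this)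
  have key : ∀ n : ℕ, ∀ x ≥ x₀,
      tail μ (x + n * h) ≤ Real.exp (-(c * h)) ^ n * tail μ x := by
    intro n
    induction n with
    | zero => intro x hx; simp
    | succ n ih =>
      intro x hx
      have harg : x + ((n : ℝ) + 1) * h = (x + h) + n * h := by ring
      have h1 : tail μ ((x + h) + n * h) ≤ Real.exp (-(c * h)) ^ n * tail μ (x + h) :=
        ih (x + h) (by linarith)
      have h2 : tail μ (x + h) ≤ Real.exp (-(c * h)) * tail μ x := step x hx
      have hexp : (0 : ℝ) ≤ Real.exp (-(c * h)) ^ n := by positivity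
      calc tail μ (x + (n + 1 : ℕ) * h) = tail μ ((x + h) + n * h) := by
            push_cast; rw [harg]
        _ ≤ Real.exp (-(c * h)) ^ n * tail μ (x + h) := h1
        _ ≤ Real.exp (-(c * h)) ^ n * (Real.exp (-(c * h)) * tail μ x) := by
            exact mul_le_mul_of_nonneg_left h2 hexp
        _ = Real.exp (-(c * h)) ^ (n + 1) * tail μ x := by ring
  refine ⟨x₀, fun x hx t ht => ?_⟩
  set s := -t with hsdef
  have hs1 : 1 ≤ s := by simp only [hsdef]; linarith
  have hsh : 0 ≤ s / h := div_nonneg (by linarith) hh0.le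
  set n := ⌊s / h⌋₊ with hndef
  have hnh : (n : ℝ) * h ≤ s := by
    rw [← le_div_iff₀ hh0]
    exact Nat.floor_le hsh
  have hnh2 : s < ((n : ℝ) + 1) * h := by
    rw [← div_lt_iff₀ hh0]
    exact_mod_cast Nat.lt_floor_add_one (s / h)
  have h1 : tail μ (x - t) ≤ tail μ (x + n * h) := by
    apply tail_anti μ
    have : x - t = x + s := by simp [hsdef]; ring
    rw [this]
    linarith
  have h2 := key n x hx
  have h3 : Real.exp (-(c * h)) ^ n = Real.exp (-(c * h * n)) := by
    rw [← Real.exp_nat_mul]; ring_nf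
  have h4 : Real.exp (-(c * h * n)) ≤ Real.exp (γ' * t) := by
    apply Real.exp_le_exp.2
    have hsn : s - h ≤ (n : ℝ) * h := by nlinarith
    have ht' : γ' * t = -(γ' * s) := by simp [hsdef]
    rw [ht']
    have hmul : c * (s - h) ≤ c * ((n : ℝ) * h) := by
      exact mul_le_mul_of_nonneg_left hsn hc0.le
    nlinarith
  calc tail μ (x - t) ≤ tail μ (x + n * h) := h1
    _ ≤ Real.exp (-(c * h)) ^ n * tail μ x := h2
    _ = Real.exp (-(c * h * n)) * tail μ x := by rw [h3]
    _ ≤ Real.exp (γ' * t) * tail μ x := mul_le_mul_of_nonneg_right h4 (hL.1 x).le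
    _ = tail μ x * Real.exp (γ' * t) := mul_comm _ _
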